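/- Let f : [0,1] → [0,1] be a strictly increasing singular function from [0,1] onto [0,1]. Then the graph of the function x ↦ 1 − f(x) is an antichain in [0,1]^2 (with respect to the coordinatewise partial order) whose 1-dimensional Hausdorff measure equals 2. -/

import Mathlib

open MeasureTheory

/-- The normalizing constant `α_s = π^(s/2) / (2^s Γ(s/2 + 1))`. Note `α_1 = 1`. -/
noncomputable def hausdorffNormalizingConstant (s : ℝ) : ENNReal :=
  ENNReal.ofReal (Real.pi ^ (s / 2) / (2 ^ s * Real.Gamma (s / 2 + 1)))

/-- The `s`-dimensional Hausdorff measure on `ℝ^n` (with the Euclidean metric), normalized by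
`α_s`. -/
noncomputable def normalizedHausdorffMeasure (n : ℕ) (s : ℝ) :
    Measure (EuclideanSpace ℝ (Fin n)) :=
  hausdorffNormalizingConstant s • Measure.hausdorffMeasure s

open Set
open scoped NNReal ENNReal

lemma aux_const_one : hausdorffNormalizingConstant 1 = 1 := by
  have h2 : Real.Gamma ((1 : ℝ) / 2 + 1) = (1 / 2) * Real.Gamma (1 / 2) :=
    Real.Gamma_add_one (by norm_num)
  have hs : Real.sqrt Real.pi ≠ 0 :=
    ne_of_gt (Real.sqrt_pos.2 Real.pi_pos)
  rw [hausdorffNormalizingConstant, h2, Real.Gamma_one_half_eq, Real.rpow_one,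
    ← Real.sqrt_eq_rpow]
  rw [show (2 : ℝ) * (1 / 2 * Real.sqrt Real.pi) = Real.sqrt Real.pi by ring,
    div_self hs, ENNReal.ofReal_one]

lemma aux_lip_proj (i : Fin 2) :
    LipschitzWith 1 (fun p : EuclideanSpace ℝ (Fin 2) => p i) := by
  apply LipschitzWith.of_dist_le_mul
  intro p q
  rw [NNReal.coe_one, one_mul, EuclideanSpace.dist_eq]
  calc dist (p i) (q i) = Real.sqrt (dist (p i) (q i) ^ 2) :=
        (Real.sqrt_sq dist_nonneg).symm
    _ ≤ _ := Real.sqrt_le_sqrt (Finset.single_le_sum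
        (f := fun j => dist (p j) (q j) ^ 2) (fun j _ => sq_nonneg _) (Finset.mem_univ i))

lemma aux_lip_refl : LipschitzWith 1 (fun y : ℝ => 1 - y) := by
  apply LipschitzWith.of_dist_le_mul
  intro a b
  rw [NNReal.coe_one, one_mul, Real.dist_eq, Real.dist_eq,
    show (1 - a) - (1 - b) = -(a - b) by ring, abs_neg]

lemma aux_image_null (f : ℝ → ℝ) (S : Set ℝ) (hSne : S.Nonempty)
    (hderiv : ∀ x ∈ S, HasDerivAt f 0 x) (hSvol : volume S = 1) :
    volume (f '' S) = 0 := by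
  have hfd : ∀ x ∈ S, HasFDerivWithinAt f (0 : ℝ →L[ℝ] ℝ) S x := by
    intro x hx
    rw [hasFDerivWithinAt_iff_hasDerivWithinAt]
    simpa using (hderiv x hx).hasDerivWithinAt
  have key : ∀ δ : ℝ≥0, 0 < δ → volume (f '' S) ≤ (δ : ℝ≥0∞) := by
    intro δ hδ
    obtain ⟨t, Am, tdisj, tmeas, tcover, tapprox, tlin⟩ :=
      exists_partition_approximatesLinearOn_of_hasFDerivWithinAt f S (fun _ => 0) hfd
        (fun _ => δ) (fun _ => hδ.ne')
    have hAm : ∀ n, Am n = 0 := by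
      intro n; obtain ⟨y, _, hy⟩ := tlin hSne n; simpa using hy
    have hlip : ∀ n, LipschitzOnWith δ f (S ∩ t n) := by
      intro n
      have h := tapprox n
      rw [hAm n] at h
      have h' := h.lipschitzOnWith
      have hzero : (f - ⇑(0 : ℝ →L[ℝ] ℝ)) = f := by funext z; simp
      rwa [hzero] at h'
    have himg : f '' S ⊆ ⋃ n, f '' (S ∩ t n) := by
      rw [← Set.image_iUnion]
      apply Set.image_mono
      intro x hx
      obtain ⟨n, hn⟩ := Set.mem_iUnion.1 (tcover hx)
      exact Set.mem_iUnion.2 ⟨n, hx, hn⟩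
    have hsum : ∑' n, volume (S ∩ t n) ≤ 1 := by
      set S' := toMeasurable volume S with hS'
      have h1 : ∀ n, volume (S ∩ t n) ≤ volume (S' ∩ t n) := fun n =>
        measure_mono (Set.inter_subset_inter_left _ (subset_toMeasurable _ _))
      calc ∑' n, volume (S ∩ t n) ≤ ∑' n, volume (S' ∩ t n) := ENNReal.tsum_le_tsum h1
        _ = volume (⋃ n, S' ∩ t n) := by
            rw [measure_iUnion ?_ fun n => (measurableSet_toMeasurable _ _).inter (tmeas n)]
            intro i j hij
            exact (tdisj hij).mono Set.inter_subset_right Set.inter_subset_right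
        _ ≤ volume S' := measure_mono (Set.iUnion_subset fun n => Set.inter_subset_left)
        _ = 1 := by rw [measure_toMeasurable, hSvol]
    calc volume (f '' S) ≤ ∑' n, volume (f '' (S ∩ t n)) :=
          (measure_mono himg).trans (measure_iUnion_le _)
      _ ≤ ∑' n, (δ : ℝ≥0∞) * volume (S ∩ t n) := by
          refine ENNReal.tsum_le_tsum fun n => ?_
          have h1 := (hlip n).hausdorffMeasure_image_le (zero_le_one' ℝ)
          rw [MeasureTheory.hausdorffMeasure_real] at h1
          simpa [ENNReal.rpow_one] using h1
      _ = (δ : ℝ≥0∞) * ∑' n, volume (S ∩ t n) := ENNReal.tsum_mul_left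
      _ ≤ (δ : ℝ≥0∞) * 1 := by gcongr
      _ = δ := mul_one _
  refine le_antisymm ?_ (by simp)
  refine ENNReal.le_of_forall_pos_le_add fun ε hε _ => ?_
  simpa using key ε hε

/-- If `f` is a strictly increasing singular function from `[0,1]` onto `[0,1]`,
then the graph of `x ↦ 1 - f x` is an antichain in `[0,1]^2` (coordinatewise order) whose
`1`-dimensional Hausdorff measure equals `2`. -/
theorem statement6 (f : ℝ → ℝ) (S : Set ℝ)
    (hmono : StrictMonoOn f (Set.Icc 0 1))
    (hcont : ContinuousOn f (Set.Icc 0 1))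
    (hmaps : Set.MapsTo f (Set.Icc 0 1) (Set.Icc 0 1))
    (hsurj : Set.SurjOn f (Set.Icc 0 1) (Set.Icc 0 1))
    (hS : S ⊆ Set.Ioo 0 1) (hSvol : volume S = 1)
    (hderiv : ∀ x ∈ S, HasDerivAt f 0 x)
    (A : Set (EuclideanSpace ℝ (Fin 2)))
    (hA : A = {p : EuclideanSpace ℝ (Fin 2) | p 0 ∈ Set.Icc (0 : ℝ) 1 ∧ p 1 = 1 - f (p 0)}) :
    A ⊆ {p : EuclideanSpace ℝ (Fin 2) | ∀ i, p i ∈ Set.Icc (0 : ℝ) 1} ∧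
    (∀ x ∈ A, ∀ y ∈ A, (∀ i, x i ≤ y i) → x = y) ∧
    normalizedHausdorffMeasure 2 1 A = 2 := by
  have hmem : ∀ p : EuclideanSpace ℝ (Fin 2),
      p ∈ A ↔ (p 0 ∈ Set.Icc (0 : ℝ) 1 ∧ p 1 = 1 - f (p 0)) := by
    intro p; rw [hA]; rfl
  -- the graph parametrization
  set γ : ℝ → EuclideanSpace ℝ (Fin 2) :=
    fun x => (WithLp.equiv 2 (Fin 2 → ℝ)).symm ![x, 1 - f x] with hγ
  have hγ0 : ∀ x, γ x 0 = x := by intro x; simp [hγ]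
  have hγ1 : ∀ x, γ x 1 = 1 - f x := by intro x; simp [hγ]
  have hγA : ∀ x ∈ Set.Icc (0 : ℝ) 1, γ x ∈ A := by
    intro x hx
    rw [hmem]
    rw [hγ0, hγ1]
    exact ⟨hx, rfl⟩
  -- Part 1: contained in the unit square
  have part1 : A ⊆ {p : EuclideanSpace ℝ (Fin 2) | ∀ i, p i ∈ Set.Icc (0 : ℝ) 1} := by
    intro p hp
    obtain ⟨hp0, hp1⟩ := (hmem p).1 hp
    intro i
    fin_cases i
    · exact hp0
    · have hf := hmaps hp0
      show p 1 ∈ Set.Icc (0:ℝ) 1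
      rw [hp1]
      constructor
      · linarith [hf.2]
      · linarith [hf.1]
  -- Part 2: antichain
  have part2 : ∀ x ∈ A, ∀ y ∈ A, (∀ i, x i ≤ y i) → x = y := by
    intro x hx y hy hle
    obtain ⟨hx0, hx1⟩ := (hmem x).1 hx
    obtain ⟨hy0, hy1⟩ := (hmem y).1 hy
    have h0 : x 0 ≤ y 0 := hle 0
    have h1 : x 1 ≤ y 1 := hle 1
    have hf : f (x 0) ≤ f (y 0) := hmono.monotoneOn hx0 hy0 h0
    have heq1 : x 1 = y 1 := le_antisymm h1 (by rw [hx1, hy1]; linarith)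
    have hfeq : f (x 0) = f (y 0) := by
      have := heq1; rw [hx1, hy1] at this; linarith
    have heq0 : x 0 = y 0 := hmono.injOn hx0 hy0 hfeq
    ext i
    fin_cases i
    · exact heq0
    · exact heq1
  refine ⟨part1, part2, ?_⟩
  -- Part 3: measure computation
  set Φ : EuclideanSpace ℝ (Fin 2) → ℝ := fun p => p 0 + 1 - p 1 with hΦ
  have hkey : ∀ p ∈ A, ∀ q ∈ A, dist p q ≤ |Φ p - Φ q| := by
    intro p hp q hq
    obtain ⟨hp0, hp1⟩ := (hmem p).1 hp
    obtain ⟨hq0, hq1⟩ := (hmem q).1 hq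
    have hab : (p 0 - q 0) * (p 1 - q 1) ≤ 0 := by
      rcases le_total (p 0) (q 0) with h | h
      · have hf : f (p 0) ≤ f (q 0) := hmono.monotoneOn hp0 hq0 h
        have : q 1 ≤ p 1 := by rw [hp1, hq1]; linarith
        nlinarith
      · have hf : f (q 0) ≤ f (p 0) := hmono.monotoneOn hq0 hp0 h
        have : p 1 ≤ q 1 := by rw [hp1, hq1]; linarith
        nlinarith
    have hdist : dist p q = Real.sqrt ((p 0 - q 0) ^ 2 + (p 1 - q 1) ^ 2) := by
      rw [EuclideanSpace.dist_eq, Fin.sum_univ_two, Real.dist_eq, Real.dist_eq,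
        sq_abs, sq_abs]
    have hsub : Φ p - Φ q = (p 0 - q 0) - (p 1 - q 1) := by rw [hΦ]; ring
    rw [hdist]
    calc Real.sqrt ((p 0 - q 0) ^ 2 + (p 1 - q 1) ^ 2)
        ≤ Real.sqrt ((Φ p - Φ q) ^ 2) := by
          apply Real.sqrt_le_sqrt
          rw [hsub]
          nlinarith
      _ = |Φ p - Φ q| := Real.sqrt_sq_eq_abs _
  have hinj : Set.InjOn Φ A := by
    intro p hp q hq h
    have h1 := hkey p hp q hq
    rw [h, sub_self, abs_zero] at h1
    exact dist_le_zero.1 h1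
  -- upper bound
  have hup : μH[1] A ≤ 2 := by
    set T : Set ℝ := Φ '' A with hT
    set ψ : ℝ → EuclideanSpace ℝ (Fin 2) := Function.invFunOn Φ A with hψ
    have hψmem : ∀ t ∈ T, ψ t ∈ A ∧ Φ (ψ t) = t := by
      rintro t ⟨p, hp, rfl⟩
      exact ⟨Function.invFunOn_mem ⟨p, hp, rfl⟩, Function.invFunOn_eq ⟨p, hp, rfl⟩⟩
    have hψlip : LipschitzOnWith 1 ψ T := by
      apply LipschitzOnWith.of_dist_le_mul
      intro t₁ ht₁ t₂ ht₂
      obtain ⟨hm₁, he₁⟩ := hψmem t₁ ht₁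
      obtain ⟨hm₂, he₂⟩ := hψmem t₂ ht₂
      rw [NNReal.coe_one, one_mul]
      calc dist (ψ t₁) (ψ t₂) ≤ |Φ (ψ t₁) - Φ (ψ t₂)| := hkey _ hm₁ _ hm₂
        _ = dist t₁ t₂ := by rw [he₁, he₂, Real.dist_eq]
    have hAim : A ⊆ ψ '' T := by
      intro p hp
      refine ⟨Φ p, Set.mem_image_of_mem _ hp, ?_⟩
      obtain ⟨hm, he⟩ := hψmem (Φ p) (Set.mem_image_of_mem _ hp)
      exact hinj hm hp he
    have hTsub : T ⊆ Set.Icc (0 : ℝ) 2 := by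
      rintro _ ⟨p, hp, rfl⟩
      obtain ⟨hp0, hp1⟩ := (hmem p).1 hp
      have hf := hmaps hp0
      rw [hΦ]
      simp only
      rw [hp1]
      constructor
      · simp only [Set.mem_Icc] at hp0 hf; linarith [hp0.1, hf.1]
      · simp only [Set.mem_Icc] at hp0 hf; linarith [hp0.2, hf.2]
    calc μH[1] A ≤ μH[1] (ψ '' T) := measure_mono hAim
      _ ≤ (1 : ℝ≥0) ^ (1 : ℝ) * μH[1] T := hψlip.hausdorffMeasure_image_le (zero_le_one' ℝ)
      _ = μH[1] T := by simp
      _ ≤ μH[1] (Set.Icc (0 : ℝ) 2) := measure_mono hTsub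
      _ = 2 := by
          rw [MeasureTheory.hausdorffMeasure_real, Real.volume_Icc]
          norm_num
  -- lower bound
  have hSne : S.Nonempty := by
    rcases S.eq_empty_or_nonempty with h | h
    · rw [h, measure_empty] at hSvol; exact absurd hSvol (by norm_num)
    · exact h
  have h0 : volume (f '' S) = 0 := aux_image_null f S hSne hderiv hSvol
  set U : Set ℝ := toMeasurable volume (f '' S) with hU
  have hUm : MeasurableSet U := measurableSet_toMeasurable _ _
  have hU0 : volume U = 0 := by rw [hU, measure_toMeasurable]; exact h0
  have hUsub : f '' S ⊆ U := subset_toMeasurable _ _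
  set B : Set (EuclideanSpace ℝ (Fin 2)) := (fun p : EuclideanSpace ℝ (Fin 2) => 1 - p 1) ⁻¹' U
    with hB
  have hBm : MeasurableSet B := by
    have hmeas : Measurable fun p : EuclideanSpace ℝ (Fin 2) => 1 - p 1 :=
      measurable_const.sub (aux_lip_proj 1).continuous.measurable
    exact hmeas hUm
  have bound1 : (1 : ℝ≥0∞) ≤ μH[1] (A ∩ B) := by
    have hsub1 : S ⊆ (fun p : EuclideanSpace ℝ (Fin 2) => p 0) '' (A ∩ B) := by
      intro x hx
      refine ⟨γ x, ⟨hγA x (Set.Ioo_subset_Icc_self (hS hx)), ?_⟩, hγ0 x⟩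
      show (1 : ℝ) - γ x 1 ∈ U
      rw [hγ1]
      have : (1 : ℝ) - (1 - f x) = f x := by ring
      rw [this]
      exact hUsub ⟨x, hx, rfl⟩
    have h1 := (aux_lip_proj 0).hausdorffMeasure_image_le (zero_le_one' ℝ) (A ∩ B)
    calc (1 : ℝ≥0∞) = volume S := hSvol.symm
      _ ≤ volume ((fun p : EuclideanSpace ℝ (Fin 2) => p 0) '' (A ∩ B)) := measure_mono hsub1
      _ = μH[1] ((fun p : EuclideanSpace ℝ (Fin 2) => p 0) '' (A ∩ B)) := by
          rw [MeasureTheory.hausdorffMeasure_real]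
      _ ≤ (1 : ℝ≥0) ^ (1 : ℝ) * μH[1] (A ∩ B) := h1
      _ = μH[1] (A ∩ B) := by simp
  have bound2 : (1 : ℝ≥0∞) ≤ μH[1] (A \ B) := by
    set W : Set ℝ := Set.Icc (0 : ℝ) 1 \ U with hW
    have hWvol : volume W = 1 := by
      rw [hW, measure_diff_null hU0, Real.volume_Icc]
      norm_num
    have hsub2 : (fun y : ℝ => 1 - y) '' W ⊆
        (fun p : EuclideanSpace ℝ (Fin 2) => p 1) '' (A \ B) := by
      rintro _ ⟨y, ⟨hyIcc, hyU⟩, rfl⟩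
      obtain ⟨x, hxIcc, hfx⟩ := hsurj hyIcc
      refine ⟨γ x, ⟨hγA x hxIcc, ?_⟩, by show γ x 1 = 1 - y; rw [hγ1, hfx]⟩
      intro hmemB
      apply hyU
      have : (1 : ℝ) - γ x 1 ∈ U := hmemB
      rw [hγ1] at this
      have h2 : (1 : ℝ) - (1 - f x) = y := by rw [hfx]; ring
      rwa [h2] at this
    have hWW : (fun y : ℝ => 1 - y) '' ((fun y : ℝ => 1 - y) '' W) = W := by
      rw [← Set.image_comp]
      have : ((fun y : ℝ => 1 - y) ∘ fun y : ℝ => 1 - y) = id := by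
        funext y; simp [Function.comp]
      rw [this, Set.image_id]
    have hW1 : μH[1] W ≤ μH[1] ((fun y : ℝ => 1 - y) '' W) := by
      have h := aux_lip_refl.hausdorffMeasure_image_le (zero_le_one' ℝ)
        ((fun y : ℝ => 1 - y) '' W)
      rw [hWW] at h
      simpa using h
    have h1 := (aux_lip_proj 1).hausdorffMeasure_image_le (zero_le_one' ℝ) (A \ B)
    calc (1 : ℝ≥0∞) = volume W := hWvol.symm
      _ = μH[1] W := by rw [MeasureTheory.hausdorffMeasure_real]
      _ ≤ μH[1] ((fun y : ℝ => 1 - y) '' W) := hW1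
      _ ≤ μH[1] ((fun p : EuclideanSpace ℝ (Fin 2) => p 1) '' (A \ B)) := measure_mono hsub2
      _ ≤ (1 : ℝ≥0) ^ (1 : ℝ) * μH[1] (A \ B) := h1
      _ = μH[1] (A \ B) := by simp
  have hlow : (2 : ℝ≥0∞) ≤ μH[1] A := by
    have hsplit := measure_inter_add_diff (μ := (μH[1] : Measure (EuclideanSpace ℝ (Fin 2)))) A hBm
    calc (2 : ℝ≥0∞) = 1 + 1 := by norm_num
      _ ≤ μH[1] (A ∩ B) + μH[1] (A \ B) := add_le_add bound1 bound2
      _ = μH[1] A := hsplit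
  have hAeq : μH[1] A = 2 := le_antisymm hup hlow
  rw [normalizedHausdorffMeasure, aux_const_one, one_smul]
  exact hAeq
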